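/- Let η₀, η₁ ∈ [0,1] with η₀ > η₁ (expansion regime ordering: eigenvalue range [−L, L]), set b = h/(2(η₀ − η₁)), c̄ = 3 L η₀ h²/(η₀ − η₁), M = [[1, b],[b, 2b²]] ⊗ I_d, and assume L h² ≤ (η₀ − η₁)². Let H ∈ ℝ^{d×d} be symmetric with all eigenvalues in [−L, L]. Then for all (q̃, p̃) ∈ ℝ^{2d}, ‖ diag(I_d, η₁ I_d) · [[I − (h²/4)H, (h/2)I],[−(h/2)H, I]] · (q̃, p̃) ‖_M² ≤ (1 + c̄) ‖ diag(I_d, η₀ I_d) · (q̃, p̃) ‖_M². -/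

import Mathlib

set_option maxHeartbeats 1000000


open scoped RealInnerProductSpace

/-- Squared twisted norm `‖(z,w)‖_M²` for `M = [[1,b],[b,2b²]] ⊗ I_d`. -/
noncomputable def Msq {d : ℕ} (b : ℝ) (z w : EuclideanSpace ℝ (Fin d)) : ℝ :=
  ‖z‖ ^ 2 + 2 * b * ⟪z, w⟫ + 2 * b ^ 2 * ‖w‖ ^ 2

/-- discriminant core polynomial nonnegativity -/
lemma Pnn (m e e1 : ℝ) (hm : 0 ≤ m) (hm4 : 4 * m ≤ 1) (he : 0 ≤ e) (he' : e ≤ 1)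
    (he1 : 0 ≤ e1) (he1' : e1 ≤ 1) :
    0 ≤ 80*e1^2+120*e*e1+40*e^2
      + m*(176*e1^4+912*e*e1^3+1576*e^2*e1^2+1120*e^3*e1+280*e^4)
      - m^2*(192*e*e1^5+768*e^2*e1^4+1248*e^3*e1^3+1056*e^4*e1^2+480*e^5*e1+96*e^6) := by
  have h1 : m * e ≤ m := by nlinarith [mul_nonneg hm (sub_nonneg.mpr he')]
  have hme : m * e * e1 ≤ 1/4 := by
    nlinarith [mul_nonneg (mul_nonneg hm he) (sub_nonneg.mpr he1')]
  have hme2 : m * e^2 ≤ 1/4 := by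
    nlinarith [mul_nonneg (mul_nonneg hm he) (sub_nonneg.mpr he')]
  have t1 : 0 ≤ m*e1^4*(176 - 192*(m*e*e1)) := by
    apply mul_nonneg (by positivity); nlinarith
  have t2 : 0 ≤ m*e*e1^3*(912 - 768*(m*e*e1)) := by
    apply mul_nonneg (by positivity); nlinarith
  have t3 : 0 ≤ m*e^2*e1^2*(1576 - 1248*(m*e*e1)) := by
    apply mul_nonneg (by positivity); nlinarith
  have t4 : 0 ≤ m*e^3*e1*(1120 - 1056*(m*e*e1)) := by
    apply mul_nonneg (by positivity); nlinarith
  have t5 : 0 ≤ m*e^4*(280 - 480*(m*e*e1) - 96*(m*e^2)) := by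
    apply mul_nonneg (by positivity); nlinarith
  nlinarith [t1, t2, t3, t4, t5, sq_nonneg e1, sq_nonneg e, mul_nonneg he he1]

lemma quad_nn (a g c x y : ℝ) (ha : 0 < a) (hd : 0 ≤ 4*a*g - c^2) :
    0 ≤ a*x^2 + g*y^2 - c*(x*y) := by
  nlinarith [sq_nonneg (2*a*x - c*y), mul_nonneg hd (sq_nonneg y), ha, mul_pos ha ha]

/-- scalar core inequality -/
lemma scalar_main (L b E e1 x y S T U V : ℝ)
    (hL : 0 < L) (hb : 0 < b) (hE : 0 < E) (he1 : 0 ≤ e1) (hsum : e1 + E ≤ 1)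
    (h4lb : 4*(L*b^2) ≤ 1)
    (hx : 0 ≤ x) (hy : 0 ≤ y)
    (hS : -(x*y) ≤ S) (hT : -(L*x^2) ≤ T) (hU : -(L*(x*y)) ≤ U) (hV : V ≤ L^2*x^2) :
    (x^2 - (2*b*E)^2/2*T + (2*b*E)*S + (2*b*E)^4/16*V - (2*b*E)^3/4*U + (2*b*E)^2/4*y^2)
      + 2*b*(e1*(S - (2*b*E)/2*T - (2*b*E)^2/2*U + (2*b*E)^3/8*V + (2*b*E)/2*y^2))
      + 2*b^2*(e1^2*(y^2 - (2*b*E)*U + (2*b*E)^2/4*V))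
    ≤ (1 + 12*L*(e1+E)*b^2*E) * (x^2 + 2*b*((e1+E)*S) + 2*b^2*((e1+E)^2*y^2)) := by
  have hη₀ : 0 < e1 + E := by linarith
  have hE1 : E ≤ 1 := by linarith
  have he1' : e1 ≤ 1 := by linarith
  have hlb : 0 ≤ L*b^2 := by positivity
  have hsq : (e1+E)^2 + e1^2 ≤ 2*(e1+E) := by nlinarith
  have s1 : L*b^2*E ≤ 1/4 := by
    nlinarith [mul_nonneg hlb (by linarith : (0:ℝ) ≤ 1 - E)]
  have s2 : L*b^2*E*((e1+E)^2+e1^2) ≤ (1/4)*(2*(e1+E)) := by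
    have := mul_le_mul s1 hsq (by positivity) (by norm_num)
    linarith
  have hα : 0 < 10*L*(e1+E)*b^2*E - L^2*b^4*E^2*((e1+E)^2+e1^2) := by
    have hfac : 0 < L*b^2*E := by positivity
    have h2 : 0 < 10*(e1+E) - L*b^2*E*((e1+E)^2+e1^2) := by linarith
    nlinarith [mul_pos hfac h2]
  have hP := Pnn (L*b^2) E e1 hlb h4lb hE.le hE1 he1 he1'
  have h9 : 0 ≤ (L*b^4*E^2) *
      (80*e1^2+120*E*e1+40*E^2
      + (L*b^2)*(176*e1^4+912*E*e1^3+1576*E^2*e1^2+1120*E^3*e1+280*E^4)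
      - (L*b^2)^2*(192*E*e1^5+768*E^2*e1^4+1248*E^3*e1^3+1056*E^4*e1^2+480*E^5*e1+96*E^6)) :=
    mul_nonneg (by positivity) hP
  have hdisc : 0 ≤ 4*(10*L*(e1+E)*b^2*E - L^2*b^4*E^2*((e1+E)^2+e1^2))
      * (b^2*E*((e1+E)+e1) + 24*L*b^4*E*(e1+E)^3)
      - (2*L*b^3*E*(13*(e1+E)^2+e1^2))^2 := by linarith [h9]
  have quad := quad_nn (10*L*(e1+E)*b^2*E - L^2*b^4*E^2*((e1+E)^2+e1^2))
      (b^2*E*((e1+E)+e1) + 24*L*b^4*E*(e1+E)^3)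
      (2*L*b^3*E*(13*(e1+E)^2+e1^2)) x y hα hdisc
  have p1 : 0 ≤ (24*L*(e1+E)^2*b^3*E) * (S + x*y) :=
    mul_nonneg (by positivity) (by linarith)
  have p2 : 0 ≤ (2*b^2*E*(e1+E)) * (T + L*x^2) :=
    mul_nonneg (by positivity) (by linarith)
  have p3 : 0 ≤ (2*b^3*E*((e1+E)^2+e1^2)) * (U + L*(x*y)) :=
    mul_nonneg (by positivity) (by linarith)
  have p4 : 0 ≤ (b^4*E^2*((e1+E)^2+e1^2)) * (L^2*x^2 - V) :=
    mul_nonneg (by positivity) (by linarith)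
  linarith [quad, p1, p2, p3, p4]

theorem stmt9 {d : ℕ} (L h η₀ η₁ : ℝ) (hL : 0 < L)
    (hη₀ : η₀ ∈ Set.Icc (0 : ℝ) 1) (hη₁ : η₁ ∈ Set.Icc (0 : ℝ) 1)
    (hgap : η₁ < η₀)
    (hh : 0 < h) (hLh : L * h ^ 2 ≤ (η₀ - η₁) ^ 2)
    -- `H` is symmetric with all eigenvalues in `[-L, L]`
    (H : EuclideanSpace ℝ (Fin d) →L[ℝ] EuclideanSpace ℝ (Fin d))
    (hsymm : ∀ u v, ⟪H u, v⟫ = ⟪u, H v⟫)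
    (hlow : ∀ u, -(L * ‖u‖ ^ 2) ≤ ⟪u, H u⟫)
    (hup : ∀ u, ⟪u, H u⟫ ≤ L * ‖u‖ ^ 2)
    (q p : EuclideanSpace ℝ (Fin d)) :
    Msq (h / (2 * (η₀ - η₁)))
        (q - (h ^ 2 / 4) • H q + (h / 2) • p)
        (η₁ • (p - (h / 2) • H q))
      ≤ (1 + 3 * L * η₀ * h ^ 2 / (η₀ - η₁)) *
          Msq (h / (2 * (η₀ - η₁))) q (η₀ • p) := by
  obtain ⟨hη₀0, hη₀1⟩ := hη₀
  obtain ⟨hη₁0, hη₁1⟩ := hη₁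
  have hE : (0:ℝ) < η₀ - η₁ := sub_pos.mpr hgap
  set b : ℝ := h / (2 * (η₀ - η₁)) with hbdef
  have hb : 0 < b := by positivity
  have hh2 : h = 2 * b * (η₀ - η₁) := by rw [hbdef]; field_simp
  clear_value b
  -- polarization-type bound
  have hpol : ∀ u v : EuclideanSpace ℝ (Fin d), ⟪u, H v⟫ ≤ L / 2 * (‖u‖^2 + ‖v‖^2) := by
    intro u v
    have hc : ⟪v, H u⟫ = ⟪u, H v⟫ := by rw [← hsymm u v, real_inner_comm]
    have ea : ⟪u + v, H (u + v)⟫ = ⟪u, H u⟫ + 2 * ⟪u, H v⟫ + ⟪v, H v⟫ := by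
      rw [map_add, inner_add_left, inner_add_right, inner_add_right, hc]; ring
    have eb : ⟪u - v, H (u - v)⟫ = ⟪u, H u⟫ - 2 * ⟪u, H v⟫ + ⟪v, H v⟫ := by
      rw [map_sub, inner_sub_left, inner_sub_right, inner_sub_right, hc]; ring
    have h1 := hup (u + v)
    have h2 := hlow (u - v)
    rw [ea, norm_add_sq_real] at h1
    rw [eb, norm_sub_sq_real] at h2
    nlinarith [h1, h2]
  have hHq : ‖H q‖ ≤ L * ‖q‖ := by
    by_cases h0 : H q = 0
    · rw [h0, norm_zero]; positivity
    · have hnq : 0 < ‖H q‖ := norm_pos_iff.mpr h0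
      have hq0 : q ≠ 0 := by rintro rfl; simp at h0
      have hqn : 0 < ‖q‖ := norm_pos_iff.mpr hq0
      have key : ∀ r : ℝ, 0 ≤ r → r * ‖H q‖^2 ≤ L/2 * (r^2*‖H q‖^2 + ‖q‖^2) := by
        intro r hr
        have h3 := hpol (r • H q) q
        rw [real_inner_smul_left, norm_smul, Real.norm_eq_abs, abs_of_nonneg hr,
          real_inner_self_eq_norm_sq] at h3
        calc r * ‖H q‖^2 ≤ L/2 * ((r*‖H q‖)^2 + ‖q‖^2) := h3
          _ = L/2 * (r^2*‖H q‖^2 + ‖q‖^2) := by ring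
      have h4 := key (‖q‖/‖H q‖) (by positivity)
      have e6 : (‖q‖/‖H q‖) * ‖H q‖^2 = ‖q‖ * ‖H q‖ := by
        field_simp
      have e7 : (‖q‖/‖H q‖)^2 * ‖H q‖^2 = ‖q‖^2 := by
        field_simp
      rw [e6, e7] at h4
      nlinarith [h4, hqn]
  have hV : ⟪H q, H q⟫ ≤ L^2 * ‖q‖^2 := by
    rw [real_inner_self_eq_norm_sq]
    nlinarith [hHq, norm_nonneg (H q), norm_nonneg q]
  have hU : -(L * (‖q‖ * ‖p‖)) ≤ ⟪p, H q⟫ := by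
    have h1 := abs_real_inner_le_norm p (H q)
    have h2 : ‖p‖ * ‖H q‖ ≤ ‖p‖ * (L * ‖q‖) := mul_le_mul_of_nonneg_left hHq (norm_nonneg p)
    have h3 := neg_abs_le (⟪p, H q⟫ : ℝ)
    nlinarith [h1, h2, h3]
  have hS : -(‖q‖ * ‖p‖) ≤ ⟪q, p⟫ := by
    have h1 := abs_real_inner_le_norm q p
    linarith [neg_abs_le (⟪q, p⟫ : ℝ)]
  have hT := hlow q
  -- expand the two Msq values
  have lhs_eq : Msq b (q - (h ^ 2 / 4) • H q + (h / 2) • p) (η₁ • (p - (h / 2) • H q))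
      = (⟪q,q⟫ - h^2/2*⟪q,H q⟫ + h*⟪q,p⟫ + h^4/16*⟪H q,H q⟫ - h^3/4*⟪p,H q⟫ + h^2/4*⟪p,p⟫)
        + 2*b*(η₁*(⟪q,p⟫ - h/2*⟪q,H q⟫ - h^2/2*⟪p,H q⟫ + h^3/8*⟪H q,H q⟫ + h/2*⟪p,p⟫))
        + 2*b^2*(η₁^2*(⟪p,p⟫ - h*⟪p,H q⟫ + h^2/4*⟪H q,H q⟫)) := by
    simp only [Msq, ← real_inner_self_eq_norm_sq]
    simp only [inner_sub_left, inner_sub_right, inner_add_left, inner_add_right,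
      real_inner_smul_left, real_inner_smul_right]
    rw [real_inner_comm p q, real_inner_comm (H q) q, real_inner_comm (H q) p]
    ring
  have rhs_eq : Msq b q (η₀ • p)
      = ⟪q,q⟫ + 2*b*(η₀*⟪q,p⟫) + 2*b^2*(η₀^2*⟪p,p⟫) := by
    simp only [Msq, ← real_inner_self_eq_norm_sq]
    simp only [real_inner_smul_left, real_inner_smul_right]
    ring
  have cbar_eq : 1 + 3 * L * η₀ * h ^ 2 / (η₀ - η₁) = 1 + 12*L*η₀*b^2*(η₀-η₁) := by
    rw [hh2]; field_simp; ring
  rw [lhs_eq, rhs_eq, cbar_eq, hh2]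
  have hA : ⟪q,q⟫ = ‖q‖^2 := real_inner_self_eq_norm_sq q
  have hC : ⟪p,p⟫ = ‖p‖^2 := real_inner_self_eq_norm_sq p
  rw [hA, hC]
  have h4lb : 4*(L*b^2) ≤ 1 := by
    rw [hh2] at hLh
    have hE2 : (0:ℝ) < (η₀ - η₁)^2 := by positivity
    have h5 : 4*(L*b^2) * (η₀-η₁)^2 ≤ 1 * (η₀-η₁)^2 := by nlinarith [hLh]
    exact le_of_mul_le_mul_right h5 hE2
  have main := scalar_main L b (η₀-η₁) η₁ ‖q‖ ‖p‖ ⟪q,p⟫ ⟪q,H q⟫ ⟪p,H q⟫ ⟪H q,H q⟫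
    hL hb hE hη₁0 (by linarith) h4lb (norm_nonneg q) (norm_nonneg p)
    hS hT hU hV
  linarith [main]
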